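/- For all α > 0, θ > 0 and β > 0, the third raw moment of the extended xgamma distribution is ∫₀^∞ x³ · f(x; α, θ, β) dx = ((α+2) · (θ·α·(α+1) + β·(α+3)·(α+4))) / (θ³·(θ+β)). -/

import Mathlib

open MeasureTheory Real
open Set

lemma integ_aux {s b : ℝ} (hs : -1 < s) (hb : 0 < b) :
    IntegrableOn (fun x : ℝ => x ^ s * Real.exp (-(b * x))) (Ioi 0) := by
  have := integrableOn_rpow_mul_exp_neg_mul_rpow (p := 1) hs one_pos hb
  simpa [Real.rpow_one] using this

/-- The third raw moment of the extended xgamma distribution. -/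
theorem exg_third_moment (α θ β : ℝ) (hα : 0 < α) (hθ : 0 < θ) (hβ : 0 < β) :
    ∫ x in Set.Ioi (0 : ℝ),
        x ^ 3 * ((θ ^ (α + 1) / ((θ + β) * Real.Gamma (α + 2))) * (α ^ 2 + α + θ * β * x ^ 2) *
          Real.exp (-θ * x) * x ^ (α - 1))
      = ((α + 2) * (θ * α * (α + 1) + β * (α + 3) * (α + 4))) / (θ ^ 3 * (θ + β)) := by
  have hθβ : (0:ℝ) < θ + β := by linarith
  have hΓ : 0 < Real.Gamma (α + 2) := Real.Gamma_pos_of_pos (by linarith)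
  have hP : (0:ℝ) < θ ^ (α + 1) := Real.rpow_pos_of_pos hθ _
  set C := θ ^ (α + 1) / ((θ + β) * Real.Gamma (α + 2)) with hC
  have hint1 : IntegrableOn (fun x : ℝ => x ^ (α + 2) * Real.exp (-(θ * x))) (Ioi 0) :=
    integ_aux (by linarith) hθ
  have hint2 : IntegrableOn (fun x : ℝ => x ^ (α + 4) * Real.exp (-(θ * x))) (Ioi 0) :=
    integ_aux (by linarith) hθ
  have heq : ∀ x ∈ Ioi (0:ℝ),
      x ^ 3 * (C * (α ^ 2 + α + θ * β * x ^ 2) * Real.exp (-θ * x) * x ^ (α - 1))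
        = (C * (α ^ 2 + α)) * (x ^ (α + 2) * Real.exp (-(θ * x)))
          + (C * (θ * β)) * (x ^ (α + 4) * Real.exp (-(θ * x))) := by
    intro x hx
    have hx0 : (0:ℝ) < x := hx
    have h3 : x ^ (α + 2) = x ^ (3:ℕ) * x ^ (α - 1) := by
      rw [← Real.rpow_natCast x 3, ← Real.rpow_add hx0]
      congr 1
      push_cast
      ring
    have h5 : x ^ (α + 4) = x ^ (3:ℕ) * (x ^ (2:ℕ) * x ^ (α - 1)) := by
      rw [← Real.rpow_natCast x 3, ← Real.rpow_natCast x 2, ← Real.rpow_add hx0,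
        ← Real.rpow_add hx0]
      congr 1
      push_cast
      ring
    rw [h3, h5, show -θ * x = -(θ * x) by ring]
    ring
  rw [setIntegral_congr_fun measurableSet_Ioi heq,
    integral_add (hint1.const_mul _) (hint2.const_mul _), integral_const_mul,
    integral_const_mul]
  have I1 : ∫ x in Ioi (0:ℝ), x ^ (α + 2) * Real.exp (-(θ * x))
      = (1 / θ) ^ (α + 3) * Real.Gamma (α + 3) := by
    have h := integral_rpow_mul_exp_neg_mul_Ioi (a := α + 3) (r := θ) (by linarith) hθ
    rw [show α + 3 - 1 = α + 2 by ring] at h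
    exact h
  have I2 : ∫ x in Ioi (0:ℝ), x ^ (α + 4) * Real.exp (-(θ * x))
      = (1 / θ) ^ (α + 5) * Real.Gamma (α + 5) := by
    have h := integral_rpow_mul_exp_neg_mul_Ioi (a := α + 5) (r := θ) (by linarith) hθ
    rw [show α + 5 - 1 = α + 4 by ring] at h
    exact h
  have g1 : Real.Gamma (α + 3) = (α + 2) * Real.Gamma (α + 2) := by
    rw [show α + 3 = (α + 2) + 1 by ring, Real.Gamma_add_one (by positivity)]
  have g2 : Real.Gamma (α + 5) = (α + 4) * ((α + 3) * ((α + 2) * Real.Gamma (α + 2))) := by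
    rw [show α + 5 = (α + 4) + 1 by ring, Real.Gamma_add_one (by positivity),
      show α + 4 = (α + 3) + 1 by ring, Real.Gamma_add_one (by positivity), g1]
  have q1 : (1 / θ) ^ (α + 3) = 1 / (θ ^ (α + 1) * θ ^ (2:ℕ)) := by
    rw [one_div, Real.inv_rpow hθ.le, ← Real.rpow_natCast θ 2, ← Real.rpow_add hθ]
    norm_num
    ring_nf
  have q2 : (1 / θ) ^ (α + 5) = 1 / (θ ^ (α + 1) * θ ^ (4:ℕ)) := by
    rw [one_div, Real.inv_rpow hθ.le, ← Real.rpow_natCast θ 4, ← Real.rpow_add hθ]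
    norm_num
    ring_nf
  rw [I1, I2, g1, g2, q1, q2, hC]
  field_simp
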